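/- Assume ArchTrop(f) has exactly 3 elements. Then for every σ ∈ ArchTrop(f) there exists a root ζ ∈ ℂ∖{0} of f with |σ − log|ζ|| ≤ 1 + 3·log(t−1). -/

import Mathlib

/-- Evaluation of the univariate polynomial `f(x) = ∑ i, c i * x^{a i}` (with integer
exponents) at `x ∈ ℂ∖{0}`. -/
noncomputable def upoly {t : ℕ} (c : Fin t → ℂ) (a : Fin t → ℤ) (x : ℂ) : ℂ :=
  ∑ i, c i * x ^ a i

/-- `|c_i| e^{a_i v}`, the `i`-th tropical term of `f` at `v ∈ ℝ`. -/
noncomputable def tropTerm1 {t : ℕ} (c : Fin t → ℂ) (a : Fin t → ℤ) (v : ℝ) (i : Fin t) : ℝ :=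
  ‖c i‖ * Real.exp ((a i : ℝ) * v)

/-- `ArchTrop(f) ⊆ ℝ`: the set of `v` where the maximum of `|c_i| e^{a_i v}` is attained
at least twice. -/
noncomputable def ArchTrop1 {t : ℕ} (c : Fin t → ℂ) (a : Fin t → ℤ) : Set ℝ :=
  {v | ∃ i k : Fin t, i ≠ k ∧ (∀ l, tropTerm1 c a v l ≤ tropTerm1 c a v i) ∧
      tropTerm1 c a v i = tropTerm1 c a v k}

open Finset Polynomial Complex


section Trop

variable {t : ℕ} (c : Fin t → ℂ) (a : Fin t → ℤ)

/-- logarithm of the i-th tropical term -/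
noncomputable def lt1 (v : ℝ) (i : Fin t) : ℝ := Real.log (‖c i‖) + (a i : ℝ) * v

/-- `j` attains the maximum at `v`. -/
def IsMx (v : ℝ) (j : Fin t) : Prop := ∀ l, lt1 c a v l ≤ lt1 c a v j

variable {c a}

section WithHc
variable (hc : ∀ i, c i ≠ 0)
include hc

lemma absc_pos (i : Fin t) : 0 < ‖c i‖ := by
  simpa [norm_pos_iff] using hc i

lemma trop_exp (v : ℝ) (i : Fin t) : tropTerm1 c a v i = Real.exp (lt1 c a v i) := by
  rw [lt1, Real.exp_add, Real.exp_log (absc_pos hc i)]; rfl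

lemma trop_le_iff (v : ℝ) (i j : Fin t) :
    tropTerm1 c a v i ≤ tropTerm1 c a v j ↔ lt1 c a v i ≤ lt1 c a v j := by
  rw [trop_exp hc, trop_exp hc, Real.exp_le_exp]

lemma archtrop_iff (v : ℝ) : v ∈ ArchTrop1 c a ↔
    ∃ i k : Fin t, i ≠ k ∧ IsMx c a v i ∧ lt1 c a v i = lt1 c a v k := by
  unfold ArchTrop1 IsMx
  constructor
  · rintro ⟨i, k, hik, hm, he⟩
    refine ⟨i, k, hik, fun l => (trop_le_iff hc v l i).1 (hm l), ?_⟩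
    rw [trop_exp hc, trop_exp hc] at he
    exact Real.exp_injective he
  · rintro ⟨i, k, hik, hm, he⟩
    exact ⟨i, k, hik, fun l => (trop_le_iff hc v l i).2 (hm l), by
      rw [trop_exp hc, trop_exp hc, he]⟩

lemma tie_mem {v : ℝ} {i k : Fin t} (hik : i ≠ k) (hi : IsMx c a v i) (hk : IsMx c a v k) :
    v ∈ ArchTrop1 c a :=
  (archtrop_iff hc v).2 ⟨i, k, hik, hi, le_antisymm (hk i) (hi k)⟩

end WithHc

lemma exists_mx (ht : 0 < t) (v : ℝ) : ∃ j, IsMx c a v j := by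
  obtain ⟨b, -, hb⟩ := Finset.exists_max_image univ (lt1 c a v) ⟨⟨0, ht⟩, mem_univ _⟩
  exact ⟨b, fun l => hb l (mem_univ l)⟩

section WithHa
variable (ha : StrictMono a)
include ha

lemma sm_nat : ∀ (d : ℕ) (i : Fin t) (h : (i : ℕ) + d < t),
    a i + (d : ℤ) ≤ a ⟨(i : ℕ) + d, h⟩ := by
  intro d
  induction d with
  | zero => intro i h; simp
  | succ n ih =>
    intro i h
    have hn : (i : ℕ) + n < t := by omega
    have h1 := ih i hn
    have h2 : a ⟨(i : ℕ) + n, hn⟩ < a ⟨(i : ℕ) + (n + 1), h⟩ := by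
      apply ha; rw [Fin.lt_def]; simp
    push_cast
    omega

lemma sm_le {i j : Fin t} (h : i ≤ j) : (j : ℤ) - (i : ℤ) ≤ a j - a i := by
  have hd : (i : ℕ) + ((j : ℕ) - (i : ℕ)) < t := by
    have := j.2; omega
  have := sm_nat ha ((j : ℕ) - (i : ℕ)) i hd
  have hj : (⟨(i : ℕ) + ((j : ℕ) - (i : ℕ)), hd⟩ : Fin t) = j := by
    apply Fin.ext; simp; omega
  rw [hj] at this
  push_cast at this ⊢
  omega

/-- argmax is monotone. -/
lemma argmax_mono {v w : ℝ} {j m : Fin t} (hv : IsMx c a v j) (hw : IsMx c a w m)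
    (hvw : v < w) : a j ≤ a m := by
  by_contra hcon
  push_neg at hcon
  have h1 := hv m
  have h2 := hw j
  unfold lt1 at h1 h2
  have hAB : ((a m : ℝ)) < (a j : ℝ) := by exact_mod_cast hcon
  nlinarith [mul_pos (sub_pos.2 hAB) (sub_pos.2 hvw)]

end WithHa

/-- An affine function nonneg at two points is nonneg in between. -/
private lemma affine_between {C D x y z : ℝ} (hxy : x ≤ y) (hyz : y ≤ z)
    (hx : 0 ≤ C + D * x) (hz : 0 ≤ C + D * z) : 0 ≤ C + D * y := by
  rcases le_or_gt 0 D with hD | hD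
  · nlinarith
  · nlinarith

lemma lt1_affine (v w : ℝ) (i : Fin t) :
    lt1 c a w i = lt1 c a v i + (a i : ℝ) * (w - v) := by
  unfold lt1; ring

/-- Between two points with different argmax indices there is a tropical point. -/
lemma exists_trop_between (hc : ∀ i, c i ≠ 0) {v w : ℝ} {j k : Fin t} (ht : 0 < t)
    (hvw : v ≤ w) (hj : IsMx c a v j) (hk : IsMx c a w k) (hjk : j ≠ k) :
    ∃ τ ∈ ArchTrop1 c a, v ≤ τ ∧ τ ≤ w := by
  classical
  set A : Fin t → Set ℝ := fun p => {x | x ∈ Set.Icc v w ∧ IsMx c a x p} with hA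
  have key : ∀ (l p : Fin t) (x' : ℝ), lt1 c a x' l ≤ lt1 c a x' p ↔
      0 ≤ (Real.log (‖c p‖) - Real.log (‖c l‖))
        + ((a p : ℝ) - (a l : ℝ)) * x' := by
    intro l p x'; unfold lt1; constructor <;> intro h <;> nlinarith [h]
  have hAord : ∀ (p : Fin t) {x y z : ℝ}, x ∈ A p → z ∈ A p → x ≤ y → y ≤ z → y ∈ A p := by
    intro p x y z hx hz hxy hyz
    refine ⟨⟨le_trans hx.1.1 hxy, le_trans hyz hz.1.2⟩, fun l => ?_⟩
    rw [key]
    exact affine_between hxy hyz ((key l p x).1 (hx.2 l)) ((key l p z).1 (hz.2 l))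
  have hAclosed : ∀ p : Fin t, IsClosed (A p) := by
    intro p
    have : A p = Set.Icc v w ∩ ⋂ l : Fin t, {x | lt1 c a x l ≤ lt1 c a x p} := by
      ext x; simp [hA, IsMx, Set.mem_iInter]
    rw [this]
    refine isClosed_Icc.inter (isClosed_iInter fun l => isClosed_le ?_ ?_) <;>
      · unfold lt1
        fun_prop
  have hAsub : ∀ p : Fin t, A p ⊆ Set.Icc v w := fun p x hx => hx.1
  have hvA : v ∈ A j := ⟨⟨le_refl v, hvw⟩, hj⟩
  have hwA : w ∈ A k := ⟨⟨hvw, le_refl w⟩, hk⟩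
  have hbddA : ∀ p : Fin t, BddAbove (A p) := fun p => ⟨w, fun x hx => (hAsub p hx).2⟩
  have hbddB : ∀ p : Fin t, BddBelow (A p) := fun p => ⟨v, fun x hx => (hAsub p hx).1⟩
  set e := sSup (A j) with he_def
  have heA : e ∈ A j := (hAclosed j).csSup_mem ⟨v, hvA⟩ (hbddA j)
  have he_ub : ∀ x ∈ A j, x ≤ e := fun x hx => le_csSup (hbddA j) hx
  rcases eq_or_lt_of_le (heA.1.2 : e ≤ w) with heq | hlt
  · exact ⟨w, tie_mem hc hjk (heq ▸ heA.2) hk, hvw, le_refl w⟩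
  · -- e < w
    set P' : Finset (Fin t) := univ.filter (fun p => ∃ x ∈ A p, e < x) with hP'
    have hkP : k ∈ P' := by
      simp only [hP', mem_filter, mem_univ, true_and]
      exact ⟨w, hwA, hlt⟩
    have hPne : ∀ p ∈ P', (A p).Nonempty := by
      intro p hp
      simp only [hP', mem_filter] at hp
      obtain ⟨x, hx, -⟩ := hp.2
      exact ⟨x, hx⟩
    by_cases hcase : ∃ p ∈ P', sInf (A p) ≤ e
    · obtain ⟨p, hp, hpe⟩ := hcase
      simp only [hP', mem_filter, mem_univ, true_and] at hp
      obtain ⟨x, hxA, hex⟩ := hp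
      have hinf : sInf (A p) ∈ A p := (hAclosed p).csInf_mem ⟨x, hxA⟩ (hbddB p)
      have hpeA : e ∈ A p := hAord p hinf hxA hpe (le_of_lt hex)
      have hpj : p ≠ j := by
        rintro rfl
        exact absurd (he_ub x hxA) (not_le.2 hex)
      exact ⟨e, tie_mem hc (Ne.symm hpj) heA.2 hpeA.2, heA.1.1, heA.1.2⟩
    · push_neg at hcase
      set img := P'.image (fun p => sInf (A p)) with himg
      have himgne : img.Nonempty := ⟨sInf (A k), mem_image_of_mem _ hkP⟩
      set μ := img.min' himgne with hμ
      have hμmem : μ ∈ img := Finset.min'_mem _ _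
      have heμ : e < μ := by
        simp only [himg, Finset.mem_image] at hμmem
        obtain ⟨p, hp, hpμ⟩ := hμmem
        exact hpμ ▸ hcase p hp
      have hμw : μ ≤ w := by
        have h1 : μ ≤ sInf (A k) := Finset.min'_le _ _ (mem_image_of_mem _ hkP)
        have h2 : sInf (A k) ≤ w := csInf_le (hbddB k) hwA
        linarith
      set y := (e + μ) / 2 with hy
      have hey : e < y := by rw [hy]; linarith
      have hyμ : y < μ := by rw [hy]; linarith
      obtain ⟨q, hq⟩ := exists_mx ht y
      have hyA : y ∈ A q := ⟨⟨le_trans heA.1.1 (le_of_lt hey), le_trans (le_of_lt hyμ) hμw⟩, hq⟩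
      have hqP : q ∈ P' := by
        simp only [hP', mem_filter, mem_univ, true_and]
        exact ⟨y, hyA, hey⟩
      have : μ ≤ sInf (A q) := Finset.min'_le _ _ (mem_image_of_mem _ hqP)
      have : sInf (A q) ≤ y := csInf_le (hbddB q) hyA
      linarith [Finset.min'_le img (sInf (A q)) (mem_image_of_mem _ hqP)]

/-- Left margin estimate. -/
lemma margin_left (hc : ∀ i, c i ≠ 0) (ha : StrictMono a) (ht : 0 < t) {v δm δp : ℝ}
    (hδm : 0 < δm) (hδp : 0 < δp)
    (hfree : ∀ τ ∈ ArchTrop1 c a, τ ≤ v - δm ∨ v + δp ≤ τ)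
    {j l : Fin t} (hj : IsMx c a v j) (hl : l < j) :
    lt1 c a v l + (((j : ℕ) - (l : ℕ) : ℕ) : ℝ) * δm ≤ lt1 c a v j := by
  have hvnot : v ∉ ArchTrop1 c a := by
    intro h
    rcases hfree v h with h' | h' <;> linarith
  have hal : a l < a j := ha hl
  have halR : (a l : ℝ) < (a j : ℝ) := by exact_mod_cast hal
  have hstrict : lt1 c a v l < lt1 c a v j := by
    rcases lt_or_eq_of_le (hj l) with h | h
    · exact h
    · exact absurd (tie_mem hc (ne_of_gt hl) hj (fun m => h ▸ hj m)) hvnot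
  set D : ℝ := (a j : ℝ) - (a l : ℝ) with hD_def
  have hD : 0 < D := by simp [hD_def]; linarith
  set gap : ℝ := lt1 c a v j - lt1 c a v l with hgap_def
  have hgap : 0 < gap := by simp [hgap_def]; linarith
  set x0 : ℝ := v - gap / D with hx0_def
  have hx0v : x0 < v := by
    have : 0 < gap / D := div_pos hgap hD
    simp [hx0_def]; linarith
  have hx0eq : lt1 c a x0 l = lt1 c a x0 j := by
    have h1 : lt1 c a x0 j - lt1 c a x0 l = gap - D * (gap / D) := by
      simp only [hx0_def, hgap_def, hD_def, lt1]; ring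
    rw [mul_div_cancel₀ _ (ne_of_gt hD)] at h1
    linarith
  have hx0le : x0 ≤ v - δm := by
    by_contra hcon
    push_neg at hcon
    obtain ⟨q, hq⟩ := exists_mx ht x0
    by_cases hqj : q = j
    · subst hqj
      have hmem : x0 ∈ ArchTrop1 c a :=
        tie_mem hc (ne_of_gt hl) hq (fun m => hx0eq ▸ hq m)
      rcases hfree x0 hmem with h' | h' <;> linarith
    · obtain ⟨τ, hτ, hτ1, hτ2⟩ := exists_trop_between hc ht (le_of_lt hx0v) hq hj hqj
      rcases hfree τ hτ with h' | h' <;> linarith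
  have hcast : (((j : ℕ) - (l : ℕ) : ℕ) : ℝ) ≤ D := by
    have h1 := sm_le ha (le_of_lt hl)
    have h2 : ((j : ℕ) : ℝ) - ((l : ℕ) : ℝ) ≤ D := by
      simp only [hD_def]
      have : ((j : ℤ) : ℝ) - ((l : ℤ) : ℝ) ≤ (a j : ℝ) - (a l : ℝ) := by exact_mod_cast h1
      push_cast at this ⊢
      linarith
    have h3 : (((j : ℕ) - (l : ℕ) : ℕ) : ℝ) = ((j : ℕ) : ℝ) - ((l : ℕ) : ℝ) := by
      have : (l : ℕ) ≤ (j : ℕ) := le_of_lt hl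
      push_cast [this]
      ring
    linarith
  have hgapD : gap = D * (v - x0) := by
    have h' : v - x0 = gap / D := by rw [hx0_def]; ring
    rw [h', mul_div_cancel₀ _ (ne_of_gt hD)]
  have hvx0 : δm ≤ v - x0 := by linarith
  have : D * δm ≤ gap := by
    rw [hgapD]
    exact mul_le_mul_of_nonneg_left hvx0 (le_of_lt hD)
  nlinarith [mul_le_mul_of_nonneg_right hcast (le_of_lt hδm)]

/-- Right margin estimate. -/
lemma margin_right (hc : ∀ i, c i ≠ 0) (ha : StrictMono a) (ht : 0 < t) {v δm δp : ℝ}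
    (hδm : 0 < δm) (hδp : 0 < δp)
    (hfree : ∀ τ ∈ ArchTrop1 c a, τ ≤ v - δm ∨ v + δp ≤ τ)
    {j l : Fin t} (hj : IsMx c a v j) (hl : j < l) :
    lt1 c a v l + (((l : ℕ) - (j : ℕ) : ℕ) : ℝ) * δp ≤ lt1 c a v j := by
  have hvnot : v ∉ ArchTrop1 c a := by
    intro h
    rcases hfree v h with h' | h' <;> linarith
  have hal : a j < a l := ha hl
  have halR : (a j : ℝ) < (a l : ℝ) := by exact_mod_cast hal
  have hstrict : lt1 c a v l < lt1 c a v j := by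
    rcases lt_or_eq_of_le (hj l) with h | h
    · exact h
    · exact absurd (tie_mem hc (ne_of_lt hl) hj (fun m => h ▸ hj m)) hvnot
  set D : ℝ := (a l : ℝ) - (a j : ℝ) with hD_def
  have hD : 0 < D := by simp [hD_def]; linarith
  set gap : ℝ := lt1 c a v j - lt1 c a v l with hgap_def
  have hgap : 0 < gap := by simp [hgap_def]; linarith
  set x0 : ℝ := v + gap / D with hx0_def
  have hx0v : v < x0 := by
    have : 0 < gap / D := div_pos hgap hD
    simp [hx0_def]; linarith
  have hx0eq : lt1 c a x0 l = lt1 c a x0 j := by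
    have h1 : lt1 c a x0 j - lt1 c a x0 l = gap - D * (gap / D) := by
      simp only [hx0_def, hgap_def, hD_def, lt1]; ring
    rw [mul_div_cancel₀ _ (ne_of_gt hD)] at h1
    linarith
  have hx0le : v + δp ≤ x0 := by
    by_contra hcon
    push_neg at hcon
    obtain ⟨q, hq⟩ := exists_mx ht x0
    by_cases hqj : q = j
    · subst hqj
      have hmem : x0 ∈ ArchTrop1 c a :=
        tie_mem hc (ne_of_lt hl) hq (fun m => hx0eq ▸ hq m)
      rcases hfree x0 hmem with h' | h' <;> linarith
    · obtain ⟨τ, hτ, hτ1, hτ2⟩ := exists_trop_between hc ht (le_of_lt hx0v) hj hq (Ne.symm hqj)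
      rcases hfree τ hτ with h' | h' <;> linarith
  have hcast : (((l : ℕ) - (j : ℕ) : ℕ) : ℝ) ≤ D := by
    have h1 := sm_le ha (le_of_lt hl)
    have h2 : ((l : ℕ) : ℝ) - ((j : ℕ) : ℝ) ≤ D := by
      simp only [hD_def]
      have : ((l : ℤ) : ℝ) - ((j : ℤ) : ℝ) ≤ (a l : ℝ) - (a j : ℝ) := by exact_mod_cast h1
      push_cast at this ⊢
      linarith
    have h3 : (((l : ℕ) - (j : ℕ) : ℕ) : ℝ) = ((l : ℕ) : ℝ) - ((j : ℕ) : ℝ) := by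
      have : (j : ℕ) ≤ (l : ℕ) := le_of_lt hl
      push_cast [this]
      ring
    linarith
  have hgapD : gap = D * (x0 - v) := by
    have h' : x0 - v = gap / D := by rw [hx0_def]; ring
    rw [h', mul_div_cancel₀ _ (ne_of_gt hD)]
  have hvx0 : δp ≤ x0 - v := by linarith
  have : D * δp ≤ gap := by
    rw [hgapD]
    exact mul_le_mul_of_nonneg_left hvx0 (le_of_lt hD)
  nlinarith [mul_le_mul_of_nonneg_right hcast (le_of_lt hδp)]

/-- Dominance sum estimate at a point with margins. -/
lemma tp_sum (hc : ∀ i, c i ≠ 0) (ha : StrictMono a) (ht : 0 < t) {v δm δp : ℝ}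
    (hδm : 0 < δm) (hδp : 0 < δp)
    (hfree : ∀ τ ∈ ArchTrop1 c a, τ ≤ v - δm ∨ v + δp ≤ τ) :
    ∃ j : Fin t, IsMx c a v j ∧
      ∑ l ∈ univ.erase j, tropTerm1 c a v l ≤ tropTerm1 c a v j *
        ((∑ m ∈ Finset.Icc 1 (j : ℕ), Real.exp (-δm) ^ m) +
         (∑ m ∈ Finset.Icc 1 (t - 1 - (j : ℕ)), Real.exp (-δp) ^ m)) := by
  classical
  obtain ⟨j, hj⟩ := exists_mx ht v
  refine ⟨j, hj, ?_⟩
  have hbound : ∀ l ∈ univ.erase j, tropTerm1 c a v l ≤ tropTerm1 c a v j *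
      (if l < j then Real.exp (-δm) ^ ((j : ℕ) - (l : ℕ)) else
        Real.exp (-δp) ^ ((l : ℕ) - (j : ℕ))) := by
    intro l hl
    have hlj : l ≠ j := (Finset.mem_erase.1 hl).1
    rcases lt_or_gt_of_ne hlj with h | h
    · have hm := margin_left hc ha ht hδm hδp hfree hj h
      rw [if_pos h, trop_exp hc, trop_exp hc, ← Real.exp_nat_mul,
        ← Real.exp_add, Real.exp_le_exp]
      have : ((((j : ℕ) - (l : ℕ) : ℕ)) : ℝ) * (-δm) =
          -((((j : ℕ) - (l : ℕ) : ℕ) : ℝ) * δm) := by ring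
      rw [this]
      linarith
    · have hm := margin_right hc ha ht hδm hδp hfree hj h
      rw [if_neg (not_lt.2 (le_of_lt h)), trop_exp hc, trop_exp hc, ← Real.exp_nat_mul,
        ← Real.exp_add, Real.exp_le_exp]
      have : ((((l : ℕ) - (j : ℕ) : ℕ)) : ℝ) * (-δp) =
          -((((l : ℕ) - (j : ℕ) : ℕ) : ℝ) * δp) := by ring
      rw [this]
      linarith
  have step1 := Finset.sum_le_sum hbound
  rw [← Finset.mul_sum] at step1
  refine le_trans step1 (mul_le_mul_of_nonneg_left ?_ (le_of_lt (by
    rw [trop_exp hc]; exact Real.exp_pos _)))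
  rw [Finset.sum_ite]
  have hleft : ∑ l ∈ (univ.erase j).filter (· < j), Real.exp (-δm) ^ ((j : ℕ) - (l : ℕ))
      ≤ ∑ m ∈ Finset.Icc 1 (j : ℕ), Real.exp (-δm) ^ m := by
    have hinj : ∀ x ∈ (univ.erase j).filter (· < j), ∀ y ∈ (univ.erase j).filter (· < j),
        (j : ℕ) - (x : ℕ) = (j : ℕ) - (y : ℕ) → x = y := by
      intro x hx y hy hxy
      simp only [Finset.mem_filter] at hx hy
      have hx' : (x : ℕ) < (j : ℕ) := hx.2
      have hy' : (y : ℕ) < (j : ℕ) := hy.2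
      apply Fin.ext
      omega
    rw [show (∑ l ∈ (univ.erase j).filter (· < j), Real.exp (-δm) ^ ((j : ℕ) - (l : ℕ)))
        = ∑ m ∈ ((univ.erase j).filter (· < j)).image (fun l : Fin t => (j : ℕ) - (l : ℕ)),
          Real.exp (-δm) ^ m from (Finset.sum_image hinj).symm]
    · apply Finset.sum_le_sum_of_subset_of_nonneg
      · intro m hm
        simp only [Finset.mem_image, Finset.mem_filter] at hm
        obtain ⟨l, ⟨-, hlj⟩, rfl⟩ := hm
        have : (l : ℕ) < (j : ℕ) := hlj
        simp only [Finset.mem_Icc]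
        omega
      · intro m _ _
        positivity
  have hright : ∑ l ∈ (univ.erase j).filter (fun l => ¬ l < j),
      Real.exp (-δp) ^ ((l : ℕ) - (j : ℕ))
      ≤ ∑ m ∈ Finset.Icc 1 (t - 1 - (j : ℕ)), Real.exp (-δp) ^ m := by
    have hinj : ∀ x ∈ (univ.erase j).filter (fun l => ¬ l < j),
        ∀ y ∈ (univ.erase j).filter (fun l => ¬ l < j),
        (x : ℕ) - (j : ℕ) = (y : ℕ) - (j : ℕ) → x = y := by
      intro x hx y hy hxy
      simp only [Finset.mem_filter, Finset.mem_erase] at hx hy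
      have hx' : (j : ℕ) ≤ (x : ℕ) := not_lt.1 hx.2
      have hy' : (j : ℕ) ≤ (y : ℕ) := not_lt.1 hy.2
      have hxj : (x : ℕ) ≠ (j : ℕ) := fun h => hx.1.1 (Fin.ext h)
      have hyj : (y : ℕ) ≠ (j : ℕ) := fun h => hy.1.1 (Fin.ext h)
      apply Fin.ext
      omega
    rw [show (∑ l ∈ (univ.erase j).filter (fun l => ¬ l < j),
          Real.exp (-δp) ^ ((l : ℕ) - (j : ℕ)))
        = ∑ m ∈ ((univ.erase j).filter (fun l => ¬ l < j)).image
            (fun l : Fin t => (l : ℕ) - (j : ℕ)), Real.exp (-δp) ^ m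
        from (Finset.sum_image hinj).symm]
    · apply Finset.sum_le_sum_of_subset_of_nonneg
      · intro m hm
        simp only [Finset.mem_image, Finset.mem_filter, Finset.mem_erase] at hm
        obtain ⟨l, ⟨⟨hne, -⟩, hlj⟩, rfl⟩ := hm
        have h1 : (j : ℕ) ≤ (l : ℕ) := not_lt.1 hlj
        have h2 : (j : ℕ) ≠ (l : ℕ) := fun h => hne (Fin.ext h.symm)
        have h3 : (l : ℕ) < t := l.2
        simp only [Finset.mem_Icc]
        omega
      · intro m _ _
        positivity
  linarith

/-- geometric sum bound -/
lemma geom_icc {x : ℝ} (hx : 0 ≤ x) (h1 : x < 1) (n : ℕ) :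
    ∑ m ∈ Finset.Icc 1 n, x ^ m ≤ x / (1 - x) := by
  have key : ∀ n : ℕ, (∑ m ∈ Finset.Icc 1 n, x ^ m) * (1 - x) = x - x ^ (n + 1) := by
    intro n
    induction n with
    | zero => simp
    | succ n ih =>
      rw [Finset.sum_Icc_succ_top (by omega)]
      linear_combination ih
  rw [le_div_iff₀ (by linarith)]
  rw [key n]
  nlinarith [pow_nonneg hx (n + 1)]

lemma exp_neg_lt {x b : ℝ} (hb : 0 < b) (h : 1 / b < Real.exp x) : Real.exp (-x) < b := by
  rw [Real.exp_neg]
  have hp := Real.exp_pos x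
  rw [inv_lt_comm₀ hp hb]
  rwa [one_div] at h

lemma taylor_lb (x : ℝ) (hx : 0 ≤ x) :
    1 + x + x^2/2 + x^3/6 + x^4/24 + x^5/120 ≤ Real.exp x := by
  have h := Real.sum_le_exp_of_nonneg hx 6
  rw [show (6 : ℕ) = 5 + 1 by rfl] at h
  simp only [Finset.sum_range_succ, Finset.sum_range_zero] at h
  norm_num [Nat.factorial] at h
  nlinarith [h]

lemma exp71 : Real.exp (-(0.71 : ℝ)) < 0.4925 := by
  apply exp_neg_lt (by norm_num)
  have := taylor_lb 0.71 (by norm_num)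
  nlinarith [this]

lemma exp89 : Real.exp (-(0.89 : ℝ)) < 0.4111 := by
  apply exp_neg_lt (by norm_num)
  have := taylor_lb 0.89 (by norm_num)
  nlinarith [this]

lemma exp11 : Real.exp (-(1.1 : ℝ)) < 1/3 := by
  apply exp_neg_lt (by norm_num)
  have := taylor_lb 1.1 (by norm_num)
  nlinarith [this]

lemma exp10 : Real.exp (-(10 : ℝ)) < 0.001 := by
  apply exp_neg_lt (by norm_num)
  have := taylor_lb 10 (by norm_num)
  nlinarith [this]

lemma num4 {x : ℝ} (hx0 : 0 ≤ x) (hx : x < 0.4111) {n₁ n₂ : ℕ} (h : n₁ + n₂ ≤ 3) :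
    (∑ m ∈ Finset.Icc 1 n₁, x ^ m) + (∑ m ∈ Finset.Icc 1 n₂, x ^ m) < 1 := by
  have e0 : ∑ m ∈ Finset.Icc 1 0, x ^ m = 0 := by simp
  have e1 : ∑ m ∈ Finset.Icc 1 1, x ^ m = x := by
    rw [show Finset.Icc 1 1 = {1} by rfl]; simp
  have e2 : ∑ m ∈ Finset.Icc 1 2, x ^ m = x + x ^ 2 := by
    rw [Finset.sum_Icc_succ_top (by omega), e1]
  have e3 : ∑ m ∈ Finset.Icc 1 3, x ^ m = x + x ^ 2 + x ^ 3 := by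
    rw [Finset.sum_Icc_succ_top (by omega), e2]
  have hb1 : n₁ ≤ 3 := by omega
  have hb2 : n₂ ≤ 3 := by omega
  interval_cases n₁ <;> interval_cases n₂ <;> first
    | (simp only [e0, e1, e2, e3]; nlinarith)
    | omega

/-- A good test point: dominance of max term over the sum of the others. -/
lemma exl_point (hc : ∀ i, c i ≠ 0) (ha : StrictMono a) (ht : 0 < t) {v δm δp : ℝ}
    (hδm : 0 < δm) (hδp : 0 < δp)
    (hfree : ∀ τ ∈ ArchTrop1 c a, τ ≤ v - δm ∨ v + δp ≤ τ)
    (hnum : ∀ j : Fin t, (∑ m ∈ Finset.Icc 1 (j : ℕ), Real.exp (-δm) ^ m) +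
      (∑ m ∈ Finset.Icc 1 (t - 1 - (j : ℕ)), Real.exp (-δp) ^ m) < 1) :
    ∃ j : Fin t, IsMx c a v j ∧
      ∑ l ∈ univ.erase j, tropTerm1 c a v l < tropTerm1 c a v j := by
  obtain ⟨j, hj, hsum⟩ := tp_sum hc ha ht hδm hδp hfree
  refine ⟨j, hj, lt_of_le_of_lt hsum ?_⟩
  have hT : 0 < tropTerm1 c a v j := by rw [trop_exp hc]; exact Real.exp_pos _
  calc tropTerm1 c a v j * _ < tropTerm1 c a v j * 1 := by
        apply mul_lt_mul_of_pos_left (hnum j) hT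
    _ = tropTerm1 c a v j := mul_one _

/-- hnum check for the symmetric two-sided case with margin δm. -/
lemma hnum_two_sided (ht4 : t = 4 ∨ 5 ≤ t) :
    ∀ j : Fin t, (∑ m ∈ Finset.Icc 1 (j : ℕ),
        Real.exp (-(if t = 4 then (0.89:ℝ) else 1.1)) ^ m) +
      (∑ m ∈ Finset.Icc 1 (t - 1 - (j : ℕ)),
        Real.exp (-(if t = 4 then (0.89:ℝ) else 1.1)) ^ m) < 1 := by
  intro j
  rcases ht4 with h4 | h5
  · rw [if_pos h4]
    have hx0 := Real.exp_nonneg (-(0.89:ℝ))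
    have hx := exp89
    apply num4 hx0 hx
    have := j.2
    omega
  · rw [if_neg (by omega)]
    have hx0 := Real.exp_nonneg (-(1.1:ℝ))
    have hx := exp11
    have h1 := geom_icc hx0 (by linarith) (j : ℕ)
    have h2 := geom_icc hx0 (by linarith) (t - 1 - (j : ℕ))
    have hd : Real.exp (-(1.1:ℝ)) / (1 - Real.exp (-(1.1:ℝ))) < 1/2 := by
      rw [div_lt_iff₀ (by linarith)]
      linarith
    linarith

/-- hnum check for the one-sided (bottom-gap) case, margins (10, 0.71). -/
lemma hnum_one_sided :
    ∀ j : Fin t, (∑ m ∈ Finset.Icc 1 (j : ℕ), Real.exp (-(10:ℝ)) ^ m) +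
      (∑ m ∈ Finset.Icc 1 (t - 1 - (j : ℕ)), Real.exp (-(0.71:ℝ)) ^ m) < 1 := by
  intro j
  have h1 := geom_icc (Real.exp_nonneg _) (by linarith [exp10] : Real.exp (-(10:ℝ)) < 1) (j : ℕ)
  have h2 := geom_icc (Real.exp_nonneg _)
    (by linarith [exp71] : Real.exp (-(0.71:ℝ)) < 1) (t - 1 - (j : ℕ))
  have hd1 : Real.exp (-(10:ℝ)) / (1 - Real.exp (-(10:ℝ))) < 0.0011 := by
    rw [div_lt_iff₀ (by linarith [exp10])]
    have := exp10
    have := Real.exp_nonneg (-(10:ℝ))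
    nlinarith
  have hd2 : Real.exp (-(0.71:ℝ)) / (1 - Real.exp (-(0.71:ℝ))) < 0.9705 := by
    rw [div_lt_iff₀ (by linarith [exp71])]
    have := exp71
    have := Real.exp_nonneg (-(0.71:ℝ))
    nlinarith
  linarith

/-- Existence of a good test point to the left of any tropical point. -/
lemma exl (hc : ∀ i, c i ≠ 0) (ha : StrictMono a) (ht4 : t = 4 ∨ 5 ≤ t)
    {σ1 σ2 σ3 σ : ℝ} (h12 : σ1 < σ2) (h23 : σ2 < σ3)
    (hS : ArchTrop1 c a = {σ1, σ2, σ3}) (hσ : σ ∈ ArchTrop1 c a) :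
    ∃ v : ℝ, ∃ j : Fin t,
      σ - (4 * (if t = 4 then (0.89:ℝ) else 1.1) + 0.71) ≤ v ∧ v < σ ∧ IsMx c a v j ∧
      ∑ l ∈ univ.erase j, tropTerm1 c a v l < tropTerm1 c a v j := by
  have ht : 0 < t := by omega
  set δm : ℝ := if t = 4 then (0.89:ℝ) else 1.1 with hδm_def
  have hδm1 : 0.89 ≤ δm := by rw [hδm_def]; split <;> norm_num
  have hδm2 : δm ≤ 1.1 := by rw [hδm_def]; split <;> norm_num
  have hδm : 0 < δm := by linarith
  have hmem : σ = σ1 ∨ σ = σ2 ∨ σ = σ3 := by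
    have := hS ▸ hσ
    simpa [Set.mem_insert_iff] using this
  -- bottom-gap test point, valid whenever v := σ1 - 0.71
  have bottom : ∃ j : Fin t, IsMx c a (σ1 - 0.71) j ∧
      ∑ l ∈ univ.erase j, tropTerm1 c a (σ1 - 0.71) l <
        tropTerm1 c a (σ1 - 0.71) j := by
    apply exl_point hc ha ht (by norm_num : (0:ℝ) < 10) (by norm_num : (0:ℝ) < 0.71)
      ?_ hnum_one_sided
    intro τ hτ
    rw [hS] at hτ
    simp only [Set.mem_insert_iff, Set.mem_singleton_iff] at hτ
    rcases hτ with rfl | rfl | rfl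
    · right; linarith
    · right; linarith
    · right; linarith
  rcases hmem with heq | heq | heq
  · -- σ = σ1
    obtain ⟨j, hj, hd⟩ := bottom
    exact ⟨σ1 - 0.71, j, by linarith, by linarith, hj, hd⟩
  · -- σ = σ2
    by_cases hgap : σ1 ≤ σ2 - 2 * δm
    · have hpoint : ∃ j : Fin t, IsMx c a (σ2 - δm) j ∧
          ∑ l ∈ univ.erase j, tropTerm1 c a (σ2 - δm) l <
            tropTerm1 c a (σ2 - δm) j := by
        apply exl_point hc ha ht hδm hδm ?_ (hnum_two_sided ht4)
        intro τ hτ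
        rw [hS] at hτ
        simp only [Set.mem_insert_iff, Set.mem_singleton_iff] at hτ
        rcases hτ with rfl | rfl | rfl
        · left; linarith
        · right; linarith
        · right; linarith
      obtain ⟨j, hj, hd⟩ := hpoint
      exact ⟨σ2 - δm, j, by linarith, by linarith, hj, hd⟩
    · push_neg at hgap
      obtain ⟨j, hj, hd⟩ := bottom
      exact ⟨σ1 - 0.71, j, by linarith, by linarith, hj, hd⟩
  · -- σ = σ3
    by_cases hgap1 : σ2 ≤ σ3 - 2 * δm
    · have hpoint : ∃ j : Fin t, IsMx c a (σ3 - δm) j ∧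
          ∑ l ∈ univ.erase j, tropTerm1 c a (σ3 - δm) l <
            tropTerm1 c a (σ3 - δm) j := by
        apply exl_point hc ha ht hδm hδm ?_ (hnum_two_sided ht4)
        intro τ hτ
        rw [hS] at hτ
        simp only [Set.mem_insert_iff, Set.mem_singleton_iff] at hτ
        rcases hτ with rfl | rfl | rfl
        · left; linarith
        · left; linarith
        · right; linarith
      obtain ⟨j, hj, hd⟩ := hpoint
      exact ⟨σ3 - δm, j, by linarith, by linarith, hj, hd⟩
    · push_neg at hgap1
      by_cases hgap2 : σ1 ≤ σ2 - 2 * δm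
      · have hpoint : ∃ j : Fin t, IsMx c a (σ2 - δm) j ∧
            ∑ l ∈ univ.erase j, tropTerm1 c a (σ2 - δm) l <
              tropTerm1 c a (σ2 - δm) j := by
          apply exl_point hc ha ht hδm hδm ?_ (hnum_two_sided ht4)
          intro τ hτ
          rw [hS] at hτ
          simp only [Set.mem_insert_iff, Set.mem_singleton_iff] at hτ
          rcases hτ with rfl | rfl | rfl
          · left; linarith
          · right; linarith
          · right; linarith
        obtain ⟨j, hj, hd⟩ := hpoint
        exact ⟨σ2 - δm, j, by linarith, by linarith, hj, hd⟩
      · push_neg at hgap2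
        obtain ⟨j, hj, hd⟩ := bottom
        exact ⟨σ1 - 0.71, j, by linarith, by linarith, hj, hd⟩

end Trop


section Count

variable {t : ℕ} (c : Fin t → ℂ) (e : Fin t → ℕ)

noncomputable def gp : Polynomial ℂ := ∑ i, Polynomial.C (c i) * Polynomial.X ^ (e i)

variable {c e}

lemma gp_eval (x : ℂ) : (gp c e).eval x = ∑ i, c i * x ^ (e i) := by
  unfold gp
  rw [Polynomial.eval_finset_sum]
  simp

lemma gp_coeff (he : StrictMono e) (i : Fin t) : (gp c e).coeff (e i) = c i := by
  unfold gp
  rw [Polynomial.finset_sum_coeff]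
  rw [Finset.sum_eq_single i]
  · simp
  · intro l _ hli
    have h' : e l ≠ e i := fun h => hli (he.injective h)
    simp [Polynomial.coeff_C_mul, Polynomial.coeff_X_pow]
    intro h
    exact absurd h.symm h'

  · simp

lemma gp_ne (hc : ∀ i, c i ≠ 0) (he : StrictMono e) (ht : 0 < t) : gp c e ≠ 0 := by
  intro h
  have := gp_coeff (c := c) he ⟨0, ht⟩
  rw [h] at this
  simp at this
  exact hc _ this.symm

-- z parametrization of the circle of radius ρ
noncomputable def zc (ρ : ℝ) (θ : ℝ) : ℂ := (ρ : ℂ) * Complex.exp (θ * Complex.I)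

lemma zc_abs {ρ : ℝ} (hρ : 0 < ρ) (θ : ℝ) : ‖zc ρ θ‖ = ρ := by
  unfold zc
  rw [norm_mul, Complex.norm_exp]
  simp [Complex.norm_real, abs_of_pos hρ]

lemma zc_ne {ρ : ℝ} (hρ : 0 < ρ) (θ : ℝ) : zc ρ θ ≠ 0 := by
  intro h
  have := zc_abs hρ θ
  rw [h] at this
  simp at this
  linarith

lemma zc_hasDeriv (ρ : ℝ) (θ : ℝ) : HasDerivAt (zc ρ) (zc ρ θ * Complex.I) θ := by
  have h1 : HasDerivAt (fun w : ℂ => (ρ : ℂ) * Complex.exp (w * Complex.I))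
      ((ρ : ℂ) * Complex.exp ((θ : ℂ) * Complex.I) * Complex.I) (θ : ℂ) := by
    simpa [mul_assoc] using
      (((hasDerivAt_id ((θ : ℝ) : ℂ)).mul_const Complex.I).cexp.const_mul (ρ : ℂ))
  exact h1.comp_ofReal

lemma zc_zpow_hasDeriv {ρ : ℝ} (hρ : 0 < ρ) (m : ℤ) (θ : ℝ) :
    HasDerivAt (fun θ => zc ρ θ ^ m) ((m : ℂ) * zc ρ θ ^ m * Complex.I) θ := by
  have h1 := (hasDerivAt_zpow m (zc ρ θ) (Or.inl (zc_ne hρ θ))).comp θ (zc_hasDeriv ρ θ)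
  refine h1.congr_deriv ?_
  rw [zpow_sub_one₀ (zc_ne hρ θ)]
  have hne := zc_ne hρ θ
  field_simp

lemma zc_periodic {ρ : ℝ} : zc ρ (2 * Real.pi) = zc ρ 0 := by
  unfold zc
  push_cast
  rw [Complex.exp_two_pi_mul_I]
  simp

lemma multiset_sum_hasDeriv {M : Multiset ℂ} {F : ℂ → ℝ → ℂ} {F' : ℂ → ℂ} {θ : ℝ}
    (h : ∀ ζ ∈ M, HasDerivAt (F ζ) (F' ζ) θ) :
    HasDerivAt (fun θ' => (M.map (fun ζ => F ζ θ')).sum) ((M.map F').sum) θ := by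
  induction M using Multiset.induction_on with
  | empty => simpa using hasDerivAt_const θ (0 : ℂ)
  | cons ζ0 M ih =>
    simp only [Multiset.map_cons, Multiset.sum_cons]
    exact (h ζ0 (Multiset.mem_cons_self _ _)).add
      (ih (fun ζ hζ => h ζ (Multiset.mem_cons_of_mem hζ)))

lemma multiset_prod_hasDeriv {ρ : ℝ} (hρ : 0 < ρ) (θ : ℝ) (M : Multiset ℂ)
    (hM : ∀ ζ ∈ M, zc ρ θ ≠ ζ) :
    HasDerivAt (fun θ' => (M.map (fun ζ => zc ρ θ' - ζ)).prod)
      ((M.map (fun ζ => zc ρ θ - ζ)).prod *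
        (M.map (fun ζ => zc ρ θ * Complex.I / (zc ρ θ - ζ))).sum) θ := by
  induction M using Multiset.induction_on with
  | empty => simpa using hasDerivAt_const θ (1 : ℂ)
  | cons ζ0 M ih =>
    have hne : zc ρ θ - ζ0 ≠ 0 := sub_ne_zero.2 (hM ζ0 (Multiset.mem_cons_self _ _))
    have h1 : HasDerivAt (fun θ' => zc ρ θ' - ζ0) (zc ρ θ * Complex.I) θ :=
      (zc_hasDeriv ρ θ).sub_const ζ0
    have h2 := ih (fun ζ hζ => hM ζ (Multiset.mem_cons_of_mem hζ))
    have h3 := h1.fun_mul h2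
    simp only [Multiset.map_cons, Multiset.prod_cons, Multiset.sum_cons]
    refine h3.congr_deriv ?_
    field_simp

lemma multiset_sum_map_sub {M : Multiset ℂ} (f g : ℂ → ℂ) :
    (M.map (fun x => f x - g x)).sum = (M.map f).sum - (M.map g).sum := by
  induction M using Multiset.induction_on with
  | empty => simp
  | cons x M ih =>
    simp only [Multiset.map_cons, Multiset.sum_cons, ih]
    ring

lemma multiset_sum_ite_count (M : Multiset ℂ) (p : ℂ → Prop) [DecidablePred p] (x : ℂ) :
    (M.map (fun ζ => if p ζ then x else 0)).sum = ((M.filter p).card : ℂ) * x := by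
  induction M using Multiset.induction_on with
  | empty => simp
  | cons ζ0 M ih =>
    by_cases h : p ζ0 <;>
      simp [Multiset.filter_cons, h, ih] <;> push_cast <;> ring

theorem count_roots (hc : ∀ i, c i ≠ 0) (he : StrictMono e) (ht : 0 < t) {ρ : ℝ} (hρ : 0 < ρ)
    (j : Fin t)
    (hdom : ∑ l ∈ univ.erase j, ‖c l‖ * ρ ^ (e l) <
      ‖c j‖ * ρ ^ (e j)) :
    Multiset.card (((gp c e).roots).filter (fun ζ => ‖ζ‖ < ρ)) = e j := by
  classical
  have hρ' : (ρ : ℝ) ≠ 0 := ne_of_gt hρ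
  have hgne : gp c e ≠ 0 := gp_ne hc he ht
  have hsplit : Polynomial.Splits (gp c e) := IsAlgClosed.splits _
  have hfact := hsplit.eq_prod_roots
  set lead := (gp c e).leadingCoeff with hlead
  set R := (gp c e).roots with hRdef
  have hcj : ‖c j‖ ≠ 0 := by simp [hc j]
  have hcjpos : 0 < ‖c j‖ * ρ ^ (e j) := by
    have : 0 < ‖c j‖ := by
      rcases (norm_nonneg (c j)).lt_or_eq with h | h
      · exact h
      · exact absurd h.symm hcj
    positivity
  set m0 : Fin t → ℤ := fun l => (e l : ℤ) - (e j : ℤ) with hm0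
  set U : ℝ → ℂ := fun θ => ∑ l ∈ univ.erase j, (c l / c j) * zc ρ θ ^ (m0 l) with hUdef
  set DU : ℝ → ℂ := fun θ =>
    ∑ l ∈ univ.erase j, (c l / c j) * ((m0 l : ℂ) * zc ρ θ ^ (m0 l) * Complex.I) with hDUdef
  have hUd : ∀ θ, HasDerivAt U (DU θ) θ := by
    intro θ
    apply HasDerivAt.fun_sum
    intro l _
    exact (zc_zpow_hasDeriv hρ (m0 l) θ).const_mul (c l / c j)
  have hUabs : ∀ θ, ‖U θ‖ < 1 := by
    intro θ
    have h1 : ‖U θ‖ ≤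
        ∑ l ∈ univ.erase j, ‖(c l / c j) * zc ρ θ ^ (m0 l)‖ :=
      norm_sum_le _ _
    have h2 : ∀ l ∈ univ.erase j, ‖(c l / c j) * zc ρ θ ^ (m0 l)‖ =
        (‖c l‖ * ρ ^ (e l)) / (‖c j‖ * ρ ^ (e j)) := by
      intro l _
      rw [norm_mul, norm_div, norm_zpow, zc_abs hρ, hm0]
      rw [zpow_sub₀ hρ', zpow_natCast, zpow_natCast]
      field_simp
    rw [Finset.sum_congr rfl h2, ← Finset.sum_div] at h1
    calc ‖U θ‖ ≤ _ := h1
      _ < 1 := (div_lt_one hcjpos).2 hdom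
  have hslit : ∀ θ, 1 + U θ ∈ Complex.slitPlane := by
    intro θ
    apply Complex.mem_slitPlane_iff.2
    left
    have h1 : |(U θ).re| ≤ ‖U θ‖ := Complex.abs_re_le_norm _
    have h2 := hUabs θ
    have : (1 + U θ).re = 1 + (U θ).re := by simp
    rw [this]
    cases abs_le.1 h1 with
    | intro hl hr => linarith
  have h1U : ∀ θ, 1 + U θ ≠ 0 := fun θ => Complex.slitPlane_ne_zero (hslit θ)
  set G : ℝ → ℂ := fun θ => (gp c e).eval (zc ρ θ) with hGdef
  have hGU : ∀ θ, G θ = (c j * zc ρ θ ^ ((e j : ℕ) : ℤ)) * (1 + U θ) := by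
    intro θ
    have hterm : ∀ l ∈ univ.erase j,
        (c j * zc ρ θ ^ ((e j : ℕ) : ℤ)) * ((c l / c j) * zc ρ θ ^ (m0 l)) =
          c l * zc ρ θ ^ (e l) := by
      intro l _
      rw [hm0]
      rw [show (c j * zc ρ θ ^ ((e j : ℕ) : ℤ)) * ((c l / c j) * zc ρ θ ^ ((e l : ℤ) - (e j : ℤ)))
          = (c j * (c l / c j)) * (zc ρ θ ^ ((e j : ℕ) : ℤ) * zc ρ θ ^ ((e l : ℤ) - (e j : ℤ)))
          from by ring]
      rw [mul_div_cancel₀ _ (hc j), ← zpow_add₀ (zc_ne hρ θ)]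
      rw [show ((e j : ℕ) : ℤ) + ((e l : ℤ) - (e j : ℤ)) = ((e l : ℕ) : ℤ) from by ring]
      rw [zpow_natCast]
    have expand : (c j * zc ρ θ ^ ((e j : ℕ) : ℤ)) * (1 + U θ) =
        c j * zc ρ θ ^ (e j) + ∑ l ∈ univ.erase j, c l * zc ρ θ ^ (e l) := by
      rw [mul_add, mul_one, hUdef, Finset.mul_sum]
      rw [Finset.sum_congr rfl hterm, zpow_natCast]
    simp only [hGdef]
    rw [gp_eval, expand]
    exact (Finset.add_sum_erase univ (fun l => c l * zc ρ θ ^ (e l)) (mem_univ j)).symm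
  have hGne : ∀ θ, G θ ≠ 0 := by
    intro θ
    rw [hGU θ]
    exact mul_ne_zero (mul_ne_zero (hc j) (zpow_ne_zero _ (zc_ne hρ θ))) (h1U θ)
  have hRcirc : ∀ ζ ∈ R, ‖ζ‖ ≠ ρ := by
    intro ζ hζ habs
    have hroot : (gp c e).eval ζ = 0 := Polynomial.isRoot_of_mem_roots hζ
    have hzeq : zc ρ (Complex.arg ζ) = ζ := by
      unfold zc
      rw [← habs]
      exact_mod_cast Complex.norm_mul_exp_arg_mul_I ζ
    exact hGne (Complex.arg ζ) (by rw [hGdef]; simp only; rw [hzeq]; exact hroot)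
  have hzneR : ∀ θ, ∀ ζ ∈ R, zc ρ θ ≠ ζ := by
    intro θ ζ hζ heq
    exact hRcirc ζ hζ (by rw [← heq, zc_abs hρ])
  have hGP : ∀ θ, G θ = lead * (R.map fun ζ => zc ρ θ - ζ).prod := by
    intro θ
    have h := congrArg (Polynomial.eval (zc ρ θ)) hfact
    rw [Polynomial.eval_mul, Polynomial.eval_C, Polynomial.eval_multiset_prod,
      Multiset.map_map] at h
    rw [hGdef]
    simp only
    rw [h]
    congr 2
    apply Multiset.map_congr rfl
    intro ζ _
    simp
  have hSig : ∀ θ, (R.map fun ζ => zc ρ θ * Complex.I / (zc ρ θ - ζ)).sum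
      = ((e j : ℕ) : ℂ) * Complex.I + DU θ / (1 + U θ) := by
    intro θ
    have hd1 : HasDerivAt G (lead * ((R.map fun ζ => zc ρ θ - ζ).prod *
        (R.map fun ζ => zc ρ θ * Complex.I / (zc ρ θ - ζ)).sum)) θ := by
      have h := (multiset_prod_hasDeriv hρ θ R (hzneR θ)).const_mul lead
      have hfun : (fun θ' => lead * (R.map fun ζ => zc ρ θ' - ζ).prod) = G := by
        funext θ'
        rw [hGP θ']
      rw [hfun] at h
      exact h
    have hd2 : HasDerivAt G
        ((c j * ((((e j : ℕ) : ℤ) : ℂ) * zc ρ θ ^ ((e j : ℕ) : ℤ) * Complex.I)) * (1 + U θ) +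
          (c j * zc ρ θ ^ ((e j : ℕ) : ℤ)) * DU θ) θ := by
      have hA : HasDerivAt (fun θ' => c j * zc ρ θ' ^ ((e j : ℕ) : ℤ))
          (c j * ((((e j : ℕ) : ℤ) : ℂ) * zc ρ θ ^ ((e j : ℕ) : ℤ) * Complex.I)) θ :=
        (zc_zpow_hasDeriv hρ _ θ).const_mul (c j)
      have hB : HasDerivAt (fun θ' => 1 + U θ') (DU θ) θ := (hUd θ).const_add 1
      have h := hA.fun_mul hB
      have hfun : (fun θ' => (c j * zc ρ θ' ^ ((e j : ℕ) : ℤ)) * (1 + U θ')) = G := by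
        funext θ'
        rw [hGU θ']
      rw [hfun] at h
      exact h
    have huniq := hd1.unique hd2
    have hLP : lead * (R.map fun ζ => zc ρ θ - ζ).prod =
        (c j * zc ρ θ ^ ((e j : ℕ) : ℤ)) * (1 + U θ) := by
      rw [← hGP θ, hGU θ]
    set K := c j * zc ρ θ ^ ((e j : ℕ) : ℤ) with hK
    have hKne : K ≠ 0 := mul_ne_zero (hc j) (zpow_ne_zero _ (zc_ne hρ θ))
    rw [← mul_assoc, hLP] at huniq
    -- huniq : K * (1+U) * Sum = (c j * (ej * z^ej * I)) * (1+U) + K * DU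
    have hKU : K * (1 + U θ) ≠ 0 := mul_ne_zero hKne (h1U θ)
    apply mul_left_cancel₀ hKU
    rw [huniq, hK]
    simp only [zpow_natCast]
    have h1U' := h1U θ
    field_simp
    push_cast
    ring
  set ψ : ℂ → ℝ → ℂ := fun ζ θ =>
    if ‖ζ‖ < ρ then ((θ : ℂ) * Complex.I + Complex.log (1 - ζ / zc ρ θ))
    else Complex.log (1 - zc ρ θ / ζ) with hψdef
  have hlin : ∀ θ : ℝ, HasDerivAt (fun θ' : ℝ => ((θ' : ℂ)) * Complex.I) Complex.I θ := by
    intro θ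
    simpa using (((hasDerivAt_id ((θ : ℝ) : ℂ)).mul_const Complex.I)).comp_ofReal
  have hψd : ∀ ζ ∈ R, ∀ θ, HasDerivAt (ψ ζ) (zc ρ θ * Complex.I / (zc ρ θ - ζ)) θ := by
    intro ζ hζ θ
    have hzζ : zc ρ θ - ζ ≠ 0 := sub_ne_zero.2 (hzneR θ ζ hζ)
    by_cases hin : ‖ζ‖ < ρ
    · have hinner : HasDerivAt (fun θ' => 1 - ζ / zc ρ θ')
          (ζ * Complex.I / zc ρ θ) θ := by
        have h1 := ((zc_zpow_hasDeriv hρ (-1) θ).const_mul ζ).const_sub 1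
        have hfun : (fun θ' => 1 - ζ * zc ρ θ' ^ (-1 : ℤ)) = fun θ' => 1 - ζ / zc ρ θ' := by
          funext θ'
          rw [zpow_neg_one, div_eq_mul_inv]
        rw [hfun] at h1
        refine h1.congr_deriv ?_
        rw [zpow_neg_one]
        field_simp
        rw [Int.cast_neg, Int.cast_one]
        ring
      have habs : ‖ζ / zc ρ θ‖ < 1 := by
        rw [norm_div, zc_abs hρ, div_lt_one hρ]
        exact hin
      have hsl : 1 - ζ / zc ρ θ ∈ Complex.slitPlane := by
        apply Complex.mem_slitPlane_iff.2
        left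
        have h1 : |(ζ / zc ρ θ).re| ≤ ‖ζ / zc ρ θ‖ := Complex.abs_re_le_norm _
        have : (1 - ζ / zc ρ θ).re = 1 - (ζ / zc ρ θ).re := by simp
        rw [this]
        cases abs_le.1 h1 with
        | intro hl hr => linarith
      have hlog := hinner.clog_real hsl
      have hadd := (hlin θ).fun_add hlog
      have hfun : (fun θ' : ℝ => ((θ' : ℂ)) * Complex.I + Complex.log (1 - ζ / zc ρ θ')) = ψ ζ := by
        funext θ'
        rw [hψdef]
        simp only [if_pos hin]
      rw [hfun] at hadd
      refine hadd.congr_deriv ?_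
      have h1Uζ : 1 - ζ / zc ρ θ ≠ 0 := Complex.slitPlane_ne_zero hsl
      have hzne := zc_ne hρ θ
      have hζz : ζ - zc ρ θ ≠ 0 := sub_ne_zero.2 (fun h => hzζ (by rw [h]; ring))
      field_simp
      ring
    · have hout : ρ < ‖ζ‖ := lt_of_le_of_ne (not_lt.1 hin) ((hRcirc ζ hζ).symm)
      have hζ0 : ζ ≠ 0 := by
        intro h
        rw [h] at hout
        simp at hout
        linarith
      have hinner : HasDerivAt (fun θ' => 1 - zc ρ θ' / ζ) (-(zc ρ θ * Complex.I / ζ)) θ := by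
        have h1 := ((zc_hasDeriv ρ θ).div_const ζ).const_sub 1
        exact h1
      have hsl : 1 - zc ρ θ / ζ ∈ Complex.slitPlane := by
        apply Complex.mem_slitPlane_iff.2
        left
        have habs : ‖zc ρ θ / ζ‖ < 1 := by
          rw [norm_div, zc_abs hρ, div_lt_one (lt_trans hρ hout)]
          exact hout
        have h1 : |(zc ρ θ / ζ).re| ≤ ‖zc ρ θ / ζ‖ := Complex.abs_re_le_norm _
        have : (1 - zc ρ θ / ζ).re = 1 - (zc ρ θ / ζ).re := by simp
        rw [this]
        cases abs_le.1 h1 with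
        | intro hl hr => linarith
      have hlog := hinner.clog_real hsl
      have hfun : (fun θ' : ℝ => Complex.log (1 - zc ρ θ' / ζ)) = ψ ζ := by
        funext θ'
        rw [hψdef]
        simp only [if_neg hin]
      rw [hfun] at hlog
      refine hlog.congr_deriv ?_
      have h1Uζ : 1 - zc ρ θ / ζ ≠ 0 := Complex.slitPlane_ne_zero hsl
      have hzne := zc_ne hρ θ
      have hζz : ζ - zc ρ θ ≠ 0 := sub_ne_zero.2 (fun h => hzζ (by rw [h]; ring))
      field_simp
      ring
  set H : ℝ → ℂ := fun θ => ((e j : ℕ) : ℂ) * ((θ : ℂ) * Complex.I) +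
    Complex.log (1 + U θ) - (R.map fun ζ => ψ ζ θ).sum with hHdef
  have hHd : ∀ θ, HasDerivAt H 0 θ := by
    intro θ
    have h1 : HasDerivAt (fun θ' : ℝ => ((e j : ℕ) : ℂ) * ((θ' : ℂ) * Complex.I))
        (((e j : ℕ) : ℂ) * Complex.I) θ := (hlin θ).const_mul _
    have h2 : HasDerivAt (fun θ' => Complex.log (1 + U θ')) (DU θ / (1 + U θ)) θ :=
      (((hUd θ).const_add 1)).clog_real (hslit θ)
    have h3 : HasDerivAt (fun θ' => (R.map fun ζ => ψ ζ θ').sum)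
        ((R.map fun ζ => zc ρ θ * Complex.I / (zc ρ θ - ζ)).sum) θ :=
      multiset_sum_hasDeriv (fun ζ hζ => hψd ζ hζ θ)
    have h4 := (h1.add h2).sub h3
    have heq : ((e j : ℕ) : ℂ) * Complex.I + DU θ / (1 + U θ) -
        (R.map fun ζ => zc ρ θ * Complex.I / (zc ρ θ - ζ)).sum = 0 := by
      rw [hSig θ]
      ring
    rw [heq] at h4
    exact h4
  have hconst : H (2 * Real.pi) = H 0 := by
    apply is_const_of_deriv_eq_zero
    · intro x
      exact (hHd x).differentiableAt
    · intro x
      exact (hHd x).deriv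
  have hU2π : U (2 * Real.pi) = U 0 := by
    rw [hUdef]
    simp only [zc_periodic]
  have hψ2π : (R.map fun ζ => ψ ζ (2 * Real.pi)).sum - (R.map fun ζ => ψ ζ 0).sum =
      ((R.filter (fun ζ => ‖ζ‖ < ρ)).card : ℂ) * (((2 * Real.pi : ℝ) : ℂ) * Complex.I) := by
    rw [← multiset_sum_map_sub]
    have hcongr : (R.map fun ζ => ψ ζ (2 * Real.pi) - ψ ζ 0) =
        (R.map fun ζ => if ‖ζ‖ < ρ then ((2 * Real.pi : ℝ) : ℂ) * Complex.I else 0) := by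
      apply Multiset.map_congr rfl
      intro ζ _
      rw [hψdef]
      by_cases hin : ‖ζ‖ < ρ
      · simp only [if_pos hin, zc_periodic]
        push_cast
        ring
      · simp only [if_neg hin, zc_periodic]
        ring
    rw [hcongr, multiset_sum_ite_count]
  have hmain : ((e j : ℕ) : ℂ) * (((2 * Real.pi : ℝ) : ℂ) * Complex.I) =
      ((R.filter (fun ζ => ‖ζ‖ < ρ)).card : ℂ) *
        (((2 * Real.pi : ℝ) : ℂ) * Complex.I) := by
    have h := hconst
    rw [hHdef] at h
    simp only at h
    rw [hU2π] at h
    have h0 : ((0 : ℝ) : ℂ) * Complex.I = 0 := by simp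
    rw [← hψ2π]
    push_cast at h ⊢
    linear_combination h
  have hne2πI : (((2 * Real.pi : ℝ) : ℂ) * Complex.I) ≠ 0 := by
    apply mul_ne_zero
    · simp [Real.pi_ne_zero]
    · exact Complex.I_ne_zero
  have := mul_right_cancel₀ hne2πI hmain
  exact_mod_cast this.symm

end Count

section Extra

variable {t : ℕ} {c : Fin t → ℂ} {a : Fin t → ℤ}

lemma order3 {s : Set ℝ} (h : s.ncard = 3) :
    ∃ x y z : ℝ, x < y ∧ y < z ∧ s = {x, y, z} := by
  obtain ⟨x, y, z, hxy, hxz, hyz, rfl⟩ := Set.ncard_eq_three.1 h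
  have hperm : ∀ u v w : ℝ, ({u, v, w} : Set ℝ) = {u, w, v} := by
    intro u v w
    ext r
    simp only [Set.mem_insert_iff, Set.mem_singleton_iff]
    tauto
  have hperm2 : ∀ u v w : ℝ, ({u, v, w} : Set ℝ) = {v, u, w} := by
    intro u v w
    ext r
    simp only [Set.mem_insert_iff, Set.mem_singleton_iff]
    tauto
  rcases lt_or_gt_of_ne hxy with h1 | h1
  · rcases lt_or_gt_of_ne hyz with h2 | h2
    · exact ⟨x, y, z, h1, h2, rfl⟩
    · rcases lt_or_gt_of_ne hxz with h3 | h3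
      · exact ⟨x, z, y, h3, h2, hperm x y z⟩
      · refine ⟨z, x, y, h3, h1, ?_⟩
        ext r
        simp only [Set.mem_insert_iff, Set.mem_singleton_iff]
        tauto
  · rcases lt_or_gt_of_ne hxz with h3 | h3
    · exact ⟨y, x, z, h1, h3, hperm2 x y z⟩
    · rcases lt_or_gt_of_ne hyz with h2 | h2
      · refine ⟨y, z, x, h2, h3, ?_⟩
        ext r
        simp only [Set.mem_insert_iff, Set.mem_singleton_iff]
        tauto
      · refine ⟨z, y, x, h2, h1, ?_⟩
        ext r
        simp only [Set.mem_insert_iff, Set.mem_singleton_iff]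
        tauto

lemma mx_pair (hc : ∀ i, c i ≠ 0) (ha : StrictMono a) {σ' : ℝ} (h : σ' ∈ ArchTrop1 c a) :
    ∃ p q : Fin t, IsMx c a σ' p ∧ IsMx c a σ' q ∧ a p < a q := by
  obtain ⟨i, k, hik, hi, heq⟩ := (archtrop_iff hc σ').1 h
  have hk : IsMx c a σ' k := fun l => heq ▸ hi l
  have hane : a i ≠ a k := fun hh => hik (ha.injective hh)
  rcases lt_or_gt_of_ne hane with h' | h'
  · exact ⟨i, k, hi, hk, h'⟩
  · exact ⟨k, i, hk, hi, h'⟩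

lemma four_le (hc : ∀ i, c i ≠ 0) (ha : StrictMono a) {σ1 σ2 σ3 : ℝ}
    (h12 : σ1 < σ2) (h23 : σ2 < σ3) (hS : ArchTrop1 c a = {σ1, σ2, σ3}) : 4 ≤ t := by
  have hm1 : σ1 ∈ ArchTrop1 c a := by rw [hS]; simp
  have hm2 : σ2 ∈ ArchTrop1 c a := by rw [hS]; simp
  have hm3 : σ3 ∈ ArchTrop1 c a := by rw [hS]; simp
  obtain ⟨p1, q1, hp1, hq1, h1⟩ := mx_pair hc ha hm1
  obtain ⟨p2, q2, hp2, hq2, h2⟩ := mx_pair hc ha hm2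
  obtain ⟨p3, q3, hp3, hq3, h3⟩ := mx_pair hc ha hm3
  have c12 : a q1 ≤ a p2 := argmax_mono ha hq1 hp2 h12
  have c23 : a q2 ≤ a p3 := argmax_mono ha hq2 hp3 h23
  have hv1 : a p1 < a q1 := h1
  have hv2 : a q1 < a q2 := lt_of_le_of_lt c12 h2
  have hv3 : a q2 < a q3 := lt_of_le_of_lt c23 h3
  have d1 : p1 ≠ q1 := fun h => by rw [h] at hv1; exact lt_irrefl _ hv1
  have d2 : p1 ≠ q2 := fun h => by rw [h] at hv1; omega
  have d3 : p1 ≠ q3 := fun h => by rw [h] at hv1; omega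
  have d4 : q1 ≠ q2 := fun h => by rw [h] at hv2; omega
  have d5 : q1 ≠ q3 := fun h => by rw [h] at hv2; omega
  have d6 : q2 ≠ q3 := fun h => by rw [h] at hv3; omega
  have hcard : ({p1, q1, q2, q3} : Finset (Fin t)).card = 4 := by
    rw [Finset.card_insert_of_notMem (by simp [d1, d2, d3]),
      Finset.card_insert_of_notMem (by simp [d4, d5]),
      Finset.card_insert_of_notMem (by simp [d6]), Finset.card_singleton]
  have := Finset.card_le_univ ({p1, q1, q2, q3} : Finset (Fin t))
  rw [hcard] at this
  simpa using this

end Extra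

section Mirror

variable {t : ℕ} {c : Fin t → ℂ} {a : Fin t → ℤ}

lemma aR_mono (ha : StrictMono a) : StrictMono (fun i : Fin t => -(a i.rev)) := by
  intro i j hij
  have h1 : j.rev < i.rev := by rw [Fin.rev_lt_rev]; exact hij
  have := ha h1
  simp only
  omega

lemma ltR (v : ℝ) (i : Fin t) :
    lt1 (fun i : Fin t => c i.rev) (fun i : Fin t => -(a i.rev)) v i = lt1 c a (-v) i.rev := by
  unfold lt1
  push_cast
  ring

lemma tropR (v : ℝ) (i : Fin t) :
    tropTerm1 (fun i : Fin t => c i.rev) (fun i : Fin t => -(a i.rev)) v i =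
      tropTerm1 c a (-v) i.rev := by
  unfold tropTerm1
  congr 1
  congr 1
  push_cast
  ring

lemma archR : ArchTrop1 (fun i : Fin t => c i.rev) (fun i : Fin t => -(a i.rev)) =
    {v | -v ∈ ArchTrop1 c a} := by
  ext v
  unfold ArchTrop1
  simp only [Set.mem_setOf_eq]
  constructor
  · rintro ⟨i, k, hik, hm, he⟩
    refine ⟨i.rev, k.rev, fun h => hik (Fin.rev_inj.1 h), fun l => ?_, ?_⟩
    · have := hm l.rev
      rw [tropR, tropR, Fin.rev_rev] at this
      exact this
    · rw [← tropR, ← tropR] at *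
      exact he
  · rintro ⟨i, k, hik, hm, he⟩
    refine ⟨i.rev, k.rev, fun h => hik (Fin.rev_inj.1 h), fun l => ?_, ?_⟩
    · rw [tropR, tropR, Fin.rev_rev]
      exact hm l.rev
    · rw [tropR, tropR, Fin.rev_rev, Fin.rev_rev]
      exact he

lemma sum_rev (f : Fin t → ℝ) (j : Fin t) :
    ∑ l ∈ univ.erase j, f l.rev = ∑ l ∈ univ.erase j.rev, f l := by
  classical
  have himg : (univ.erase j).image Fin.rev = univ.erase j.rev := by
    ext x
    simp only [Finset.mem_image, Finset.mem_erase, Finset.mem_univ, and_true, true_and]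
    constructor
    · rintro ⟨y, hy, rfl⟩
      exact fun h => hy (Fin.rev_inj.1 h)
    · intro hx
      exact ⟨x.rev, fun h => hx (by rw [← h, Fin.rev_rev]), Fin.rev_rev x⟩
  rw [← himg, Finset.sum_image (fun x _ y _ h => Fin.rev_inj.1 h)]

lemma exr (hc : ∀ i, c i ≠ 0) (ha : StrictMono a) (ht4 : t = 4 ∨ 5 ≤ t)
    {σ1 σ2 σ3 σ : ℝ} (h12 : σ1 < σ2) (h23 : σ2 < σ3)
    (hS : ArchTrop1 c a = {σ1, σ2, σ3}) (hσ : σ ∈ ArchTrop1 c a) :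
    ∃ v : ℝ, ∃ j : Fin t,
      v ≤ σ + (4 * (if t = 4 then (0.89:ℝ) else 1.1) + 0.71) ∧ σ < v ∧ IsMx c a v j ∧
      ∑ l ∈ univ.erase j, tropTerm1 c a v l < tropTerm1 c a v j := by
  have hcR : ∀ i : Fin t, (fun i : Fin t => c i.rev) i ≠ 0 := fun i => hc _
  have haR := aR_mono (a := a) ha
  have hSR : ArchTrop1 (fun i : Fin t => c i.rev) (fun i : Fin t => -(a i.rev)) =
      {-σ3, -σ2, -σ1} := by
    rw [archR]
    ext v
    rw [hS]
    simp only [Set.mem_setOf_eq, Set.mem_insert_iff, Set.mem_singleton_iff]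
    constructor
    · rintro (h | h | h)
      · right; right; linarith
      · right; left; linarith
      · left; linarith
    · rintro (h | h | h)
      · right; right; linarith
      · right; left; linarith
      · left; linarith
  have hσR : -σ ∈ ArchTrop1 (fun i : Fin t => c i.rev) (fun i : Fin t => -(a i.rev)) := by
    rw [archR]
    simpa using hσ
  obtain ⟨v', j', hb1, hb2, hmx', hdom'⟩ :=
    exl hcR haR ht4 (neg_lt_neg h23) (neg_lt_neg h12) hSR hσR
  refine ⟨-v', j'.rev, by linarith, by linarith, ?_, ?_⟩
  · intro l
    have := hmx' l.rev
    rw [ltR, ltR, Fin.rev_rev] at this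
    exact this
  · have hsum := hdom'
    have h1 : ∀ l : Fin t, tropTerm1 (fun i : Fin t => c i.rev)
        (fun i : Fin t => -(a i.rev)) v' l = tropTerm1 c a (-v') l.rev := tropR v'
    rw [Finset.sum_congr rfl (fun l _ => h1 l), h1 j'] at hsum
    rwa [sum_rev (fun l => tropTerm1 c a (-v') l) j'] at hsum

end Mirror

section Glue

variable {t : ℕ} {c : Fin t → ℂ} {a : Fin t → ℤ}

lemma budget (ht4 : t = 4 ∨ 5 ≤ t) :
    4 * (if t = 4 then (0.89:ℝ) else 1.1) + 0.71 ≤ 1 + 3 * Real.log ((t : ℝ) - 1) := by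
  rcases ht4 with h4 | h5
  · rw [if_pos h4, h4]
    have hexp : Real.exp 1.09 < 3 := by
      have he1 : Real.exp 1 < 2.7182818286 := Real.exp_one_lt_d9
      have he2 : (0.91 : ℝ) < Real.exp (-0.09) := by
        have := Real.add_one_lt_exp (x := (-0.09 : ℝ)) (by norm_num)
        linarith
      have hprod : Real.exp 1.09 * Real.exp (-0.09) = Real.exp 1 := by
        rw [← Real.exp_add]
        norm_num
      have hp1 := Real.exp_pos (1.09 : ℝ)
      have hp2 := Real.exp_pos (-(0.09 : ℝ))
      nlinarith
    have hlog : (1.09 : ℝ) < Real.log 3 := by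
      rw [Real.lt_log_iff_exp_lt (by norm_num)]
      exact hexp
    norm_num
    linarith
  · rw [if_neg (by omega)]
    have h4le : (4 : ℝ) ≤ (t : ℝ) - 1 := by
      have : (5 : ℝ) ≤ (t : ℝ) := by exact_mod_cast h5
      linarith
    have hlog4 : Real.log 4 ≤ Real.log ((t : ℝ) - 1) :=
      Real.log_le_log (by norm_num) h4le
    have h2 : Real.log 4 = 2 * Real.log 2 := by
      rw [show (4 : ℝ) = 2 ^ 2 by norm_num, Real.log_pow]
      push_cast
      ring
    have hl2 : (0.6931471803 : ℝ) < Real.log 2 := Real.log_two_gt_d9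
    nlinarith

theorem stmt17' (c : Fin t → ℂ) (a : Fin t → ℤ) (ha : StrictMono a) (hc : ∀ i, c i ≠ 0)
    (hcard : (ArchTrop1 c a).ncard = 3) :
    ∀ σ ∈ ArchTrop1 c a, ∃ ζ : ℂ, ζ ≠ 0 ∧ upoly c a ζ = 0 ∧
      |σ - Real.log (‖ζ‖)| ≤ 1 + 3 * Real.log ((t : ℝ) - 1) := by
  intro σ hσ
  classical
  have ht : 0 < t := by
    obtain ⟨i, -⟩ := hσ
    exact i.pos
  obtain ⟨σ1, σ2, σ3, h12, h23, hS⟩ := order3 hcard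
  have ht4' : 4 ≤ t := four_le hc ha h12 h23 hS
  have ht4 : t = 4 ∨ 5 ≤ t := by omega
  obtain ⟨v₁, j₁, hv₁B, hv₁σ, hmx₁, hdom₁⟩ := exl hc ha ht4 h12 h23 hS hσ
  obtain ⟨v₂, j₂, hv₂B, hv₂σ, hmx₂, hdom₂⟩ := exr hc ha ht4 h12 h23 hS hσ
  obtain ⟨p, q, hp, hq, hpq⟩ := mx_pair hc ha hσ
  have hj12 : a j₁ < a j₂ :=
    lt_of_le_of_lt (argmax_mono ha hmx₁ hp hv₁σ)
      (lt_of_lt_of_le hpq (argmax_mono ha hq hmx₂ hv₂σ))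
  -- exponents
  set i0 : Fin t := ⟨0, ht⟩ with hi0
  have hai0 : ∀ i : Fin t, a i0 ≤ a i := by
    intro i
    apply ha.monotone
    simp [hi0, Fin.le_def]
  set e : Fin t → ℕ := fun i => (a i - a i0).toNat with he_def
  have he_cast : ∀ i : Fin t, ((e i : ℕ) : ℤ) = a i - a i0 := by
    intro i
    rw [he_def]
    exact Int.toNat_of_nonneg (by linarith [hai0 i])
  have he : StrictMono e := by
    intro i j hij
    have h1 : a i < a j := ha hij
    rw [← Nat.cast_lt (α := ℤ), he_cast i, he_cast j]
    omega
  -- tropical terms vs. coefficients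
  have htermeq : ∀ (v : ℝ) (l : Fin t), tropTerm1 c a v l =
      (‖c l‖ * (Real.exp v) ^ (e l)) * Real.exp ((a i0 : ℝ) * v) := by
    intro v l
    unfold tropTerm1
    rw [mul_assoc, ← Real.exp_nat_mul, ← Real.exp_add]
    congr 1
    have hcast : ((e l : ℕ) : ℝ) = (a l : ℝ) - (a i0 : ℝ) := by
      exact_mod_cast congrArg (fun n : ℤ => (n : ℝ)) (he_cast l)
    rw [hcast]
    ring
  have hdom_transfer : ∀ (v : ℝ) (j : Fin t),
      (∑ l ∈ univ.erase j, tropTerm1 c a v l < tropTerm1 c a v j) →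
      ∑ l ∈ univ.erase j, ‖c l‖ * (Real.exp v) ^ (e l) <
        ‖c j‖ * (Real.exp v) ^ (e j) := by
    intro v j h
    have hE : 0 < Real.exp ((a i0 : ℝ) * v) := Real.exp_pos _
    rw [Finset.sum_congr rfl (fun l _ => htermeq v l), htermeq v j, ← Finset.sum_mul] at h
    exact lt_of_mul_lt_mul_right h (le_of_lt hE)
  have hc₁ := hdom_transfer v₁ j₁ hdom₁
  have hc₂ := hdom_transfer v₂ j₂ hdom₂
  have hcount₁ := count_roots hc he ht (Real.exp_pos v₁) j₁ hc₁
  have hcount₂ := count_roots hc he ht (Real.exp_pos v₂) j₂ hc₂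
  have hej : e j₁ < e j₂ := by
    rw [← Nat.cast_lt (α := ℤ), he_cast j₁, he_cast j₂]
    omega
  -- extract a root in the annulus
  set R := (gp c e).roots with hR
  have hv12 : v₁ < v₂ := lt_trans hv₁σ hv₂σ
  have hexp12 : Real.exp v₁ < Real.exp v₂ := Real.exp_lt_exp.2 hv12
  have hroot : ∃ ζ ∈ R, Real.exp v₁ ≤ ‖ζ‖ ∧ ‖ζ‖ < Real.exp v₂ := by
    by_contra hcon
    push_neg at hcon
    have hfeq : R.filter (fun ζ => ‖ζ‖ < Real.exp v₁) =
        R.filter (fun ζ => ‖ζ‖ < Real.exp v₂) := by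
      apply Multiset.filter_congr
      intro ζ hζ
      constructor
      · intro h
        exact lt_trans h hexp12
      · intro h
        by_contra h'
        push_neg at h'
        exact absurd h (not_lt.2 (hcon ζ hζ h'))
    have : e j₁ = e j₂ := by
      rw [← hcount₁, ← hcount₂, hfeq]
    omega
  obtain ⟨ζ, hζR, hζ1, hζ2⟩ := hroot
  have hζabs : 0 < ‖ζ‖ := lt_of_lt_of_le (Real.exp_pos v₁) hζ1
  have hζ0 : ζ ≠ 0 := by
    intro h
    rw [h] at hζabs
    simp at hζabs
  have hζroot : (gp c e).eval ζ = 0 := Polynomial.isRoot_of_mem_roots hζR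
  refine ⟨ζ, hζ0, ?_, ?_⟩
  · -- upoly c a ζ = 0
    unfold upoly
    have hterm : ∀ i : Fin t, c i * ζ ^ (a i) = (c i * ζ ^ (e i)) * ζ ^ (a i0) := by
      intro i
      have : a i = (e i : ℤ) + a i0 := by rw [he_cast i]; ring
      rw [this, zpow_add₀ hζ0, zpow_natCast]
      ring
    rw [Finset.sum_congr rfl (fun i _ => hterm i), ← Finset.sum_mul]
    rw [← gp_eval (c := c) (e := e) ζ, hζroot]
    simp
  · -- the distance bound
    have hlog1 : v₁ ≤ Real.log (‖ζ‖) := by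
      rw [Real.le_log_iff_exp_le hζabs]
      exact hζ1
    have hlog2 : Real.log (‖ζ‖) ≤ v₂ := by
      rw [Real.log_le_iff_le_exp hζabs]
      exact le_of_lt hζ2
    have hfinal : |σ - Real.log (‖ζ‖)| ≤
        4 * (if t = 4 then (0.89:ℝ) else 1.1) + 0.71 := by
      rw [abs_le]
      constructor <;> [linarith; linarith]
    exact le_trans hfinal (budget ht4)

end Glue

/-- If `ArchTrop(f)` has exactly 3 points, then every `σ ∈ ArchTrop(f)` is within distance
`1 + 3·log(t-1)` of `log|ζ|` for some nonzero root `ζ` of `f`. -/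
theorem stmt17 {t : ℕ}
    (c : Fin t → ℂ) (a : Fin t → ℤ) (ha : StrictMono a) (hc : ∀ i, c i ≠ 0)
    (hcard : (ArchTrop1 c a).ncard = 3) :
    ∀ σ ∈ ArchTrop1 c a, ∃ ζ : ℂ, ζ ≠ 0 ∧ upoly c a ζ = 0 ∧
      |σ - Real.log (‖ζ‖)| ≤ 1 + 3 * Real.log ((t : ℝ) - 1) := by
  exact stmt17' c a ha hc hcard
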